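/- Every core point for the symmetric group S_d acting on Z^d by permuting coordinates is translation equivalent to a 0/1-vector, and conversely every 0/1-vector is a core point; moreover, up to normalizer equivalence there are exactly ⌊d/2⌋ + 1 core points for S_d. -/

import Mathlib

/-- The set of integer vectors in `ℝ^d`. -/
def intVecs (d : ℕ) : Set (Fin d → ℝ) := {x | ∀ i, ∃ k : ℤ, x i = (k : ℝ)}

/-- The orbit of `z` under the full symmetric group permuting coordinates. -/
def symOrbit {d : ℕ} (z : Fin d → ℝ) : Set (Fin d → ℝ) :=
  {x | ∃ σ : Equiv.Perm (Fin d), x = z ∘ ⇑σ}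

/-- `z` is a core point for `S_d`: it is integral and the only integer points of the
convex hull of its orbit are the orbit points themselves. -/
def IsCoreSd {d : ℕ} (z : Fin d → ℝ) : Prop :=
  z ∈ intVecs d ∧ convexHull ℝ (symOrbit z) ∩ intVecs d = symOrbit z

/-- Normalizer equivalence for `S_d`: `w = S z + t·𝟙` with `S ∈ GL(d,ℤ)` normalizing the
group of permutation matrices and `t·𝟙` an integral fixed vector. -/
def NormEquivSd {d : ℕ} (z w : Fin d → ℝ) : Prop :=
  ∃ (S : (Fin d → ℝ) ≃ₗ[ℝ] (Fin d → ℝ)) (t : ℤ),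
    ⇑S '' intVecs d = intVecs d ∧
    (∀ σ : Equiv.Perm (Fin d), ∃ τ : Equiv.Perm (Fin d),
      ∀ x : Fin d → ℝ, S (x ∘ ⇑σ) = (S x) ∘ ⇑τ) ∧
    w = S z + fun _ => (t : ℝ)

open Finset

variable {d : ℕ}

noncomputable def onesCard {d : ℕ} (x : Fin d → ℝ) : ℕ := (univ.filter (fun i => x i = 1)).card

lemma sum_eq_onesCard (x : Fin d → ℝ) (hx : ∀ i, x i = 0 ∨ x i = 1) :
    ∑ i, x i = (onesCard x : ℝ) := by
  classical
  rw [onesCard]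
  rw [← Finset.sum_filter_ne_zero (s := univ) (f := fun i => x i)]
  have h1 : (univ.filter fun i => x i ≠ 0) = univ.filter (fun i => x i = 1) := by
    apply Finset.filter_congr
    intro i _
    rcases hx i with h | h <;> simp [h]
  rw [h1, Finset.sum_congr rfl (fun i hi => (Finset.mem_filter.1 hi).2), Finset.sum_const,
    nsmul_eq_mul, mul_one]

lemma exists_perm_of_onesCard {x y : Fin d → ℝ} (hx : ∀ i, x i = 0 ∨ x i = 1)
    (hy : ∀ i, y i = 0 ∨ y i = 1) (h : onesCard x = onesCard y) :
    ∃ σ : Equiv.Perm (Fin d), x = y ∘ ⇑σ := by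
  have hcard : Fintype.card {i // x i = 1} = Fintype.card {i // y i = 1} := by
    simpa [Fintype.card_subtype, onesCard] using h
  classical
  let e : {i // x i = 1} ≃ {i // y i = 1} := Fintype.equivOfCardEq hcard
  refine ⟨e.extendSubtype, ?_⟩
  funext i
  by_cases hi : x i = 1
  · have := e.extendSubtype_mem i hi
    simp only [Function.comp_apply]
    rw [hi, this]
  · have h2 := e.extendSubtype_not_mem i hi
    have hx0 := (hx i).resolve_right hi
    have hy0 := (hy _).resolve_right h2
    simp only [Function.comp_apply]
    rw [hx0, hy0]

noncomputable def sumLM (d : ℕ) : (Fin d → ℝ) →ₗ[ℝ] ℝ where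
  toFun x := ∑ i, x i
  map_add' x y := by simp [Finset.sum_add_distrib]
  map_smul' c x := by simp [Finset.mul_sum]

lemma mem_symOrbit_self (z : Fin d → ℝ) : z ∈ symOrbit z := ⟨1, by ext i; simp⟩

lemma onesCard_comp_perm (x : Fin d → ℝ) (σ : Equiv.Perm (Fin d)) :
    onesCard (x ∘ ⇑σ) = onesCard x := by
  classical
  unfold onesCard
  apply Finset.card_bij (fun i _ => σ i)
  · intro a ha; simp only [mem_filter, mem_univ, true_and] at ha ⊢; exact ha
  · intro a _ b _ h; exact σ.injective h
  · intro b hb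
    refine ⟨σ.symm b, ?_, by simp⟩
    simp only [mem_filter, mem_univ, true_and, Function.comp_apply, Equiv.apply_symm_apply] at hb ⊢
    exact hb

lemma zeroOne_isCore (z : Fin d → ℝ) (hz : ∀ i, z i = 0 ∨ z i = 1) : IsCoreSd z := by
  classical
  have hzint : z ∈ intVecs d := by
    intro i; rcases hz i with h | h
    · exact ⟨0, by simp [h]⟩
    · exact ⟨1, by simp [h]⟩
  have horbint : symOrbit z ⊆ intVecs d := by
    rintro x ⟨σ, rfl⟩ i; exact hzint (σ i)
  refine ⟨hzint, ?_⟩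
  apply Set.Subset.antisymm
  · rintro x ⟨hxh, hxint⟩
    -- coordinates in [0,1]
    have hbox : ∀ y ∈ convexHull ℝ (symOrbit z), y ∈ Set.pi Set.univ (fun _ : Fin d => Set.Icc (0:ℝ) 1) := by
      apply convexHull_min
      · rintro y ⟨σ, rfl⟩ i _
        rcases hz (σ i) with h | h <;> simp [Function.comp_apply, h]
      · exact convex_pi (fun i _ => convex_Icc 0 1)
    have hsum : ∀ y ∈ convexHull ℝ (symOrbit z), sumLM d y = sumLM d z := by
      apply convexHull_min
      · rintro y ⟨σ, rfl⟩
        show ∑ i, z (σ i) = ∑ i, z i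
        exact Equiv.sum_comp σ z
      · exact convex_hyperplane (sumLM d).isLinear (sumLM d z)
    have hx01 : ∀ i, x i = 0 ∨ x i = 1 := by
      intro i
      obtain ⟨k, hk⟩ := hxint i
      have h1 := hbox x hxh i (Set.mem_univ i)
      rw [hk] at h1 ⊢
      rcases h1 with ⟨h2, h3⟩
      have : k = 0 ∨ k = 1 := by
        have : (0:ℤ) ≤ k := by exact_mod_cast h2
        have : k ≤ 1 := by exact_mod_cast h3
        omega
      rcases this with h | h <;> simp [h]
    have hcard : onesCard x = onesCard z := by
      have h1 : (onesCard x : ℝ) = onesCard z := by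
        rw [← sum_eq_onesCard x hx01, ← sum_eq_onesCard z hz]
        exact hsum x hxh
      exact_mod_cast h1
    exact exists_perm_of_onesCard hx01 hz hcard
  · intro x hx
    exact ⟨subset_convexHull ℝ _ hx, horbint hx⟩

lemma core_close (z : Fin d → ℝ) (hz : IsCoreSd z) (i j : Fin d) : z j ≤ z i + 1 := by
  classical
  obtain ⟨hint, hcore⟩ := hz
  by_contra hlt
  push_neg at hlt
  obtain ⟨a, ha⟩ := hint i
  obtain ⟨b, hb⟩ := hint j
  have hab : a + 2 ≤ b := by
    have h1 : (a:ℝ) + 1 < b := by rw [← ha, ← hb]; exact hlt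
    have h2 : a + 1 < b := by exact_mod_cast h1
    omega
  have hij : i ≠ j := by
    intro h; rw [h, hb] at ha
    have : b = a := by exact_mod_cast ha
    omega
  have habR : (a:ℝ) + 2 ≤ b := by exact_mod_cast hab
  set w : Fin d → ℝ := Function.update (Function.update z i ((a:ℝ) + 1)) j ((b:ℝ) - 1) with hw
  have hswap : z ∘ ⇑(Equiv.swap i j) ∈ symOrbit z := ⟨Equiv.swap i j, rfl⟩
  have hself : z ∈ symOrbit z := ⟨1, by ext l; simp⟩
  have hba : (0:ℝ) < (b:ℝ) - a := by linarith
  set μ : ℝ := 1 / ((b:ℝ) - a) with hμ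
  have hμba : μ * ((b:ℝ) - a) = 1 := by
    rw [hμ]; field_simp
  have hμ0 : 0 ≤ μ := by positivity
  have hμ1 : μ ≤ 1 := by
    rw [hμ, div_le_one hba]; linarith
  have hcomb : w = (1 - μ) • z + μ • (z ∘ ⇑(Equiv.swap i j)) := by
    funext l
    simp only [Pi.add_apply, Pi.smul_apply, smul_eq_mul, Function.comp_apply]
    by_cases hlj : l = j
    · subst hlj
      rw [hw]
      simp only [Function.update_self, Equiv.swap_apply_right]
      rw [hb, ha]; nlinarith [hμba]
    · by_cases hli : l = i
      · subst hli
        rw [hw, Function.update_of_ne hij, Function.update_self, Equiv.swap_apply_left, ha, hb]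
        nlinarith [hμba]
      · rw [hw, Function.update_of_ne hlj, Function.update_of_ne hli,
          Equiv.swap_apply_of_ne_of_ne hli hlj]
        ring
  have hwhull : w ∈ convexHull ℝ (symOrbit z) := by
    rw [hcomb]
    exact (convex_convexHull ℝ (symOrbit z)) (subset_convexHull ℝ _ hself)
      (subset_convexHull ℝ _ hswap) (by linarith) hμ0 (by ring)
  have hwint : w ∈ intVecs d := by
    intro l
    by_cases hlj : l = j
    · subst hlj; exact ⟨b - 1, by rw [hw]; simp [Function.update_self]⟩
    · by_cases hli : l = i
      · subst hli
        refine ⟨a + 1, ?_⟩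
        rw [hw, Function.update_of_ne hij, Function.update_self]; push_cast; ring
      · rw [hw, Function.update_of_ne hlj, Function.update_of_ne hli]
        exact hint l
  have hworb : w ∈ symOrbit z := by rw [← hcore]; exact ⟨hwhull, hwint⟩
  obtain ⟨σ, hσ⟩ := hworb
  -- sum of squares contradiction
  have hsumw : ∑ l, (w l) ^ 2 = ∑ l, (z l) ^ 2 := by
    rw [hσ]
    exact Equiv.sum_comp σ (fun l => z l ^ 2)
  have hiu : i ∈ (univ : Finset (Fin d)) \ {j} := by simp [hij]
  have hdecomp : ∀ f : Fin d → ℝ,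
      ∑ l, Function.update (Function.update f i ((f i)+0)) j (f j) l = f j + (f i + ∑ l ∈ (univ \ {j}) \ {i}, f l) := by
    intro f
    rw [Finset.sum_update_of_mem (mem_univ j), Finset.sum_update_of_mem hiu]
    ring_nf
  have hsq_w : (fun l => w l ^ 2) =
      Function.update (Function.update (fun l => z l ^ 2) i (((a:ℝ)+1)^2)) j (((b:ℝ)-1)^2) := by
    rw [hw]
    funext l
    by_cases hlj : l = j
    · subst hlj; simp [Function.update_self]
    · by_cases hli : l = i
      · subst hli; simp [Function.update_of_ne hij, Function.update_self]
      · simp [Function.update_of_ne hlj, Function.update_of_ne hli]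
  have hsum1 : ∑ l, w l ^ 2 = ((b:ℝ)-1)^2 + (((a:ℝ)+1)^2 + ∑ l ∈ (univ \ {j}) \ {i}, z l ^ 2) := by
    calc ∑ l, w l ^ 2 = ∑ l, (fun l => w l ^ 2) l := rfl
    _ = _ := by
        rw [hsq_w, Finset.sum_update_of_mem (mem_univ j), Finset.sum_update_of_mem hiu]
  have hsum2 : ∑ l, z l ^ 2 = (z j)^2 + ((z i)^2 + ∑ l ∈ (univ \ {j}) \ {i}, z l ^ 2) := by
    have h1 : (fun l => z l ^ 2) =
        Function.update (Function.update (fun l => z l ^ 2) i ((z i)^2)) j ((z j)^2) := by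
      simp [Function.update_eq_self]
    calc ∑ l, z l ^ 2 = ∑ l, (fun l => z l ^ 2) l := rfl
    _ = _ := by
        conv_lhs => rw [h1]
        rw [Finset.sum_update_of_mem (mem_univ j), Finset.sum_update_of_mem hiu]
  rw [hsum1, hsum2, ha, hb] at hsumw
  nlinarith [hsumw]

lemma core_translate (hd : 0 < d) (z : Fin d → ℝ) (hz : IsCoreSd z) :
    ∃ t : ℤ, ∀ i, z i = (t : ℝ) ∨ z i = (t : ℝ) + 1 := by
  classical
  have : Nonempty (Fin d) := ⟨⟨0, hd⟩⟩
  choose m hm using hz.1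
  obtain ⟨i₀, -, hi₀⟩ := Finset.exists_min_image univ m ⟨⟨0, hd⟩, mem_univ _⟩
  refine ⟨m i₀, fun i => ?_⟩
  have h1 : m i₀ ≤ m i := hi₀ i (mem_univ i)
  have h2 : z i ≤ z i₀ + 1 := core_close z hz i₀ i
  rw [hm i, hm i₀] at h2
  have h3 : m i ≤ m i₀ + 1 := by exact_mod_cast h2
  rw [hm i]
  have : m i = m i₀ ∨ m i = m i₀ + 1 := by omega
  rcases this with h | h <;> [left; right] <;> rw [h] <;> push_cast <;> ring

noncomputable def permL (σ : Equiv.Perm (Fin d)) : (Fin d → ℝ) ≃ₗ[ℝ] (Fin d → ℝ) where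
  toFun x := x ∘ ⇑σ
  invFun x := x ∘ ⇑σ.symm
  left_inv x := by ext i; simp
  right_inv x := by ext i; simp
  map_add' x y := rfl
  map_smul' c x := rfl

lemma permL_img (σ : Equiv.Perm (Fin d)) : ⇑(permL σ) '' intVecs d = intVecs d := by
  apply Set.Subset.antisymm
  · rintro y ⟨x, hx, rfl⟩ i
    exact hx (σ i)
  · intro y hy
    exact ⟨y ∘ ⇑σ.symm, fun i => hy (σ.symm i), by ext i; simp [permL]⟩

lemma permL_norm (σ : Equiv.Perm (Fin d)) :
    ∀ π : Equiv.Perm (Fin d), ∃ τ : Equiv.Perm (Fin d),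
      ∀ x : Fin d → ℝ, (permL σ) (x ∘ ⇑π) = ((permL σ) x) ∘ ⇑τ := by
  intro π
  refine ⟨σ⁻¹ * π * σ, fun x => ?_⟩
  ext i
  simp [permL, Equiv.Perm.mul_apply]

noncomputable def negPermL (σ : Equiv.Perm (Fin d)) : (Fin d → ℝ) ≃ₗ[ℝ] (Fin d → ℝ) :=
  (permL σ).trans (LinearEquiv.neg ℝ)

lemma negPermL_apply (σ : Equiv.Perm (Fin d)) (x : Fin d → ℝ) :
    negPermL σ x = -(x ∘ ⇑σ) := rfl

lemma negPermL_img (σ : Equiv.Perm (Fin d)) : ⇑(negPermL σ) '' intVecs d = intVecs d := by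
  apply Set.Subset.antisymm
  · rintro y ⟨x, hx, rfl⟩ i
    obtain ⟨k, hk⟩ := hx (σ i)
    exact ⟨-k, by simp [negPermL_apply, hk]⟩
  · intro y hy
    refine ⟨(-y) ∘ ⇑σ.symm, fun i => ?_, by ext i; simp [negPermL_apply]⟩
    obtain ⟨k, hk⟩ := hy (σ.symm i)
    exact ⟨-k, by simp [hk]⟩

lemma negPermL_norm (σ : Equiv.Perm (Fin d)) :
    ∀ π : Equiv.Perm (Fin d), ∃ τ : Equiv.Perm (Fin d),
      ∀ x : Fin d → ℝ, (negPermL σ) (x ∘ ⇑π) = ((negPermL σ) x) ∘ ⇑τ := by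
  intro π
  refine ⟨σ⁻¹ * π * σ, fun x => ?_⟩
  ext i
  simp [negPermL_apply, Equiv.Perm.mul_apply]

lemma choose_mono_half {k l : ℕ} (hkl : k < l) (hl : l ≤ d / 2) :
    d.choose k < d.choose l := by
  have step : ∀ r, r + 1 ≤ d / 2 → d.choose r < d.choose (r + 1) := by
    intro r hr
    have h1 := Nat.choose_succ_right_eq d r
    have hrd : r ≤ d := by omega
    have hpos : 0 < d.choose r := Nat.choose_pos hrd
    have h2 : r + 2 ≤ d - r := by omega
    have : d.choose r * (r + 1) < d.choose (r + 1) * (r + 1) := by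
      rw [h1]
      calc d.choose r * (r+1) < d.choose r * (r+2) := by
            exact Nat.mul_lt_mul_of_le_of_lt (le_refl _) (by omega) hpos
      _ ≤ d.choose r * (d - r) := Nat.mul_le_mul_left _ h2
    exact Nat.lt_of_mul_lt_mul_right this
  induction l with
  | zero => omega
  | succ n ih =>
    rcases Nat.lt_or_ge k n with h | h
    · exact lt_trans (ih h (by omega)) (step n hl)
    · have : k = n := by omega
      subst this
      exact step k hl

def reps01 (d k : ℕ) : Fin d → ℝ := fun i => if (i : ℕ) < k then 1 else 0

lemma reps01_zeroOne (k : ℕ) : ∀ i, reps01 d k i = 0 ∨ reps01 d k i = 1 := by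
  intro i; unfold reps01; split <;> simp

lemma onesCard_reps01 {k : ℕ} (hk : k ≤ d) : onesCard (reps01 d k) = k := by
  classical
  unfold onesCard
  have h1 : (univ.filter (fun i : Fin d => reps01 d k i = 1)) =
      (univ : Finset (Fin k)).map (Fin.castLEEmb hk) := by
    ext i
    simp only [mem_filter, mem_univ, true_and, Finset.mem_map]
    constructor
    · intro h
      have hik : (i : ℕ) < k := by
        by_contra hc
        simp [reps01, hc] at h
      refine ⟨⟨i, hik⟩, ?_⟩
      simp [Fin.castLEEmb, Fin.ext_iff]
    · rintro ⟨j, rfl⟩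
      simp [reps01, Fin.castLEEmb, j.2]
  rw [h1, Finset.card_map, Finset.card_univ, Fintype.card_fin]

lemma symOrbit_eq_B (z : Fin d → ℝ) (hz : ∀ i, z i = 0 ∨ z i = 1) :
    symOrbit z = {x | (∀ i, x i = 0 ∨ x i = 1) ∧ onesCard x = onesCard z} := by
  ext x
  constructor
  · rintro ⟨σ, rfl⟩
    exact ⟨fun i => hz (σ i), onesCard_comp_perm z σ⟩
  · rintro ⟨hx01, hxc⟩
    exact exists_perm_of_onesCard hx01 hz hxc

lemma ncard_B (k : ℕ) :
    ({x | (∀ i, x i = 0 ∨ x i = 1) ∧ onesCard x = k} : Set (Fin d → ℝ)).ncard = d.choose k := by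
  classical
  set B : Set (Fin d → ℝ) := {x | (∀ i, x i = 0 ∨ x i = 1) ∧ onesCard x = k} with hB
  set F : (Fin d → ℝ) → Finset (Fin d) := fun x => univ.filter (fun i => x i = 1) with hF
  have hinj : Set.InjOn F B := by
    rintro x ⟨hx01, -⟩ y ⟨hy01, -⟩ hxy
    funext i
    have h1 : x i = 1 ↔ y i = 1 := by
      constructor <;> intro h
      · have : i ∈ F x := by simp [hF, h]
        rw [hxy] at this; simpa [hF] using this
      · have : i ∈ F y := by simp [hF, h]
        rw [← hxy] at this; simpa [hF] using this
    rcases hx01 i with h | h <;> rcases hy01 i with h' | h' <;>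
      simp_all
  have himg : F '' B = ↑(Finset.powersetCard k (univ : Finset (Fin d))) := by
    ext s
    simp only [Set.mem_image, Finset.coe_sort_coe, Finset.mem_coe, Finset.mem_powersetCard]
    constructor
    · rintro ⟨x, ⟨hx01, hxk⟩, rfl⟩
      exact ⟨Finset.subset_univ _, hxk⟩
    · rintro ⟨-, hsk⟩
      refine ⟨fun i => if i ∈ s then 1 else 0, ⟨fun i => by dsimp only; split <;> simp, ?_⟩, ?_⟩
      · rw [← hsk, onesCard]
        congr 1
        ext i
        simp only [mem_filter, mem_univ, true_and]
        split <;> simp_all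
      · rw [hF]
        ext i
        simp only [mem_filter, mem_univ, true_and]
        split <;> simp_all
  have := Set.ncard_image_of_injOn hinj
  rw [himg] at this
  rw [← this, Set.ncard_coe_finset, Finset.card_powersetCard, Finset.card_univ, Fintype.card_fin]

lemma normEquiv_ncard {z w : Fin d → ℝ} (h : NormEquivSd z w) :
    (symOrbit z).ncard = (symOrbit w).ncard := by
  classical
  obtain ⟨S, t, -, hnorm, rfl⟩ := h
  choose τ hτ using hnorm
  have hτinj : Function.Injective τ := by
    intro σ₁ σ₂ hts
    have hxeq : ∀ x : Fin d → ℝ, x ∘ ⇑σ₁ = x ∘ ⇑σ₂ := by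
      intro x
      apply S.injective
      rw [hτ σ₁ x, hτ σ₂ x, hts]
    ext i
    have h2 := congrFun (hxeq (fun j => ((j : ℕ) : ℝ))) i
    simp only [Function.comp_apply] at h2
    have h3 : ((σ₁ i : ℕ) : ℝ) = ((σ₂ i : ℕ) : ℝ) := h2
    exact_mod_cast h3
  have hτsurj : Function.Surjective τ := Finite.surjective_of_injective hτinj
  set F : (Fin d → ℝ) → (Fin d → ℝ) := fun x => S x + fun _ => (t : ℝ) with hFdef
  have hFinj : Function.Injective F := by
    intro x y hxy
    apply S.injective
    have := congrArg (fun u => u - fun _ : Fin d => (t:ℝ)) hxy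
    simpa [hFdef] using hxy
  have horb : symOrbit (S z + fun _ => (t : ℝ)) = F '' symOrbit z := by
    ext y
    constructor
    · rintro ⟨π, rfl⟩
      obtain ⟨σ, hσ⟩ := hτsurj π
      refine ⟨z ∘ ⇑σ, ⟨σ, rfl⟩, ?_⟩
      rw [hFdef]
      simp only
      rw [hτ σ z, hσ]
      funext i
      simp
    · rintro ⟨x, ⟨σ, rfl⟩, rfl⟩
      refine ⟨τ σ, ?_⟩
      rw [hFdef]
      simp only
      rw [hτ σ z]
      funext i
      simp
  rw [horb, Set.ncard_image_of_injective _ hFinj]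

/-- Every core point for `S_d` is translation equivalent to a `0/1`-vector,
every `0/1`-vector is a core point, and there are exactly `⌊d/2⌋ + 1` core points up to
normalizer equivalence. -/
theorem stmt_11 {d : ℕ} (hd : 0 < d) :
    (∀ z : Fin d → ℝ, IsCoreSd z → ∃ t : ℤ, ∀ i, z i = (t : ℝ) ∨ z i = (t : ℝ) + 1) ∧
    (∀ z : Fin d → ℝ, (∀ i, z i = 0 ∨ z i = 1) → IsCoreSd z) ∧
    (∃ reps : Fin (d / 2 + 1) → (Fin d → ℝ),
      (∀ k, IsCoreSd (reps k)) ∧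
      (∀ k l, k ≠ l → ¬ NormEquivSd (reps k) (reps l)) ∧
      (∀ z, IsCoreSd z → ∃ k, NormEquivSd z (reps k))) := by
  refine ⟨core_translate hd, zeroOne_isCore, ?_⟩
  refine ⟨fun k => reps01 d (k : ℕ), ?_, ?_, ?_⟩
  · intro k
    exact zeroOne_isCore _ (reps01_zeroOne _)
  · intro k l hkl hne
    have hkd : (k : ℕ) ≤ d / 2 := by omega
    have hld : (l : ℕ) ≤ d / 2 := by omega
    have hkd' : (k : ℕ) ≤ d := le_trans hkd (Nat.div_le_self _ _)
    have hld' : (l : ℕ) ≤ d := le_trans hld (Nat.div_le_self _ _)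
    have hcard := normEquiv_ncard hne
    rw [symOrbit_eq_B _ (reps01_zeroOne _), symOrbit_eq_B _ (reps01_zeroOne _),
      onesCard_reps01 hkd', onesCard_reps01 hld', ncard_B, ncard_B] at hcard
    rcases Nat.lt_or_ge (k : ℕ) (l : ℕ) with h | h
    · exact absurd hcard (Nat.ne_of_lt (choose_mono_half h hld))
    · have h2 : (l : ℕ) < (k : ℕ) := by
        rcases Nat.lt_or_ge (l : ℕ) (k : ℕ) with h' | h'
        · exact h'
        · exact absurd (Fin.ext (le_antisymm h' h)) hkl
      exact absurd hcard.symm (Nat.ne_of_lt (choose_mono_half h2 hkd))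
  · intro z hz
    obtain ⟨t, ht⟩ := core_translate hd z hz
    classical
    set v : Fin d → ℝ := fun i => z i - (t : ℝ) with hv
    have hv01 : ∀ i, v i = 0 ∨ v i = 1 := by
      intro i
      rcases ht i with h | h
      · left; show z i - (t:ℝ) = 0; rw [h]; ring
      · right; show z i - (t:ℝ) = 1; rw [h]; ring
    set kk : ℕ := onesCard v with hkk
    have hkd : kk ≤ d := by
      rw [hkk, onesCard]
      exact le_trans (Finset.card_filter_le _ _) (by simp)
    rcases le_or_gt kk (d / 2) with hhalf | hhalf
    · -- use a permutation
      obtain ⟨σ, hσ⟩ := exists_perm_of_onesCard (reps01_zeroOne (d := d) kk) hv01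
        (by rw [onesCard_reps01 hkd])
      refine ⟨⟨kk, by omega⟩, permL σ, -t, permL_img σ, permL_norm σ, ?_⟩
      funext i
      have h1 := congrFun hσ i
      simp only [Function.comp_apply] at h1
      show reps01 d kk i = permL σ z i + ((-t : ℤ) : ℝ)
      have h2 : permL σ z i = z (σ i) := rfl
      rw [h1, h2, hv]
      push_cast
      ring
    · -- use minus a permutation
      set u : Fin d → ℝ := fun i => 1 - v i with hu
      have hu01 : ∀ i, u i = 0 ∨ u i = 1 := by
        intro i
        rcases hv01 i with h | h
        · right; rw [hu]; simp [h]
        · left; rw [hu]; simp [h]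
      have hucard : onesCard u = d - kk := by
        have hsplit := Finset.card_filter_add_card_filter_not
          (s := (univ : Finset (Fin d))) (p := fun i => v i = 1)
        have huv : (univ.filter (fun i => u i = 1)) = (univ.filter (fun i => ¬ v i = 1)) := by
          apply Finset.filter_congr
          intro i _
          rcases hv01 i with h | h <;> simp [hu, h]
        rw [onesCard, huv]
        have hcu : (univ : Finset (Fin d)).card = d := by simp
        rw [hkk, onesCard] at *
        omega
      have hdk : d - kk ≤ d / 2 := by omega
      have hdk' : d - kk ≤ d := Nat.sub_le _ _
      obtain ⟨σ, hσ⟩ := exists_perm_of_onesCard (reps01_zeroOne (d := d) (d - kk)) hu01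
        (by rw [onesCard_reps01 hdk', hucard])
      refine ⟨⟨d - kk, by omega⟩, negPermL σ, t + 1, negPermL_img σ, negPermL_norm σ, ?_⟩
      funext i
      have h1 := congrFun hσ i
      simp only [Function.comp_apply] at h1
      show reps01 d (d - kk) i = negPermL σ z i + ((t + 1 : ℤ) : ℝ)
      have h2 : negPermL σ z i = -(z (σ i)) := rfl
      rw [h1, hu, h2]
      simp only
      rw [hv]
      push_cast
      ring
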